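/- Let K̂_n(x) = max(0, 1 − |x|/(n+1)) for x ∈ ℝ (the Fourier transform of the Fejér kernel). If (n_k) is lacunary with ratio α > 1, then for every x ∈ ℝ and every N ∈ ℕ, ∑_{k=1}^{N} |K̂_{n_{k+1}}(x) − K̂_{n_k}(x)| ≤ 2α/(α−1). -/
import Mathlib


/-- Fourier transform of the Fejér kernel. -/
noncomputable def fejerSymbol (n : ℕ) (x : ℝ) : ℝ := max 0 (1 - |x| / (n + 1))

lemma fejerSymbol_mono {m m' : ℕ} (h : m ≤ m') (x : ℝ) :
    fejerSymbol m x ≤ fejerSymbol m' x := by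
  unfold fejerSymbol
  apply max_le_max le_rfl
  gcongr

lemma fejerSymbol_le_one (m : ℕ) (x : ℝ) : fejerSymbol m x ≤ 1 := by
  unfold fejerSymbol
  have : |x| / (m + 1 : ℝ) ≥ 0 := by positivity
  simp only [max_le_iff]
  constructor <;> linarith

lemma fejerSymbol_nonneg (m : ℕ) (x : ℝ) : 0 ≤ fejerSymbol m x := le_max_left _ _

theorem stmt_2 (n : ℕ → ℕ) (hn : ∀ k, 0 < n k) (α : ℝ) (hα : 1 < α)
    (hlac : ∀ k, α ≤ (n (k + 1) : ℝ) / (n k : ℝ)) :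
    ∀ (x : ℝ) (N : ℕ),
      ∑ k ∈ Finset.Icc 1 N, |fejerSymbol (n (k + 1)) x - fejerSymbol (n k) x|
        ≤ 2 * α / (α - 1) := by
  intro x N
  have hmono : ∀ k, n k ≤ n (k + 1) := by
    intro k
    have h1 := hlac k
    have h2 : (0 : ℝ) < (n k : ℝ) := by exact_mod_cast hn k
    have : (n k : ℝ) ≤ (n (k + 1) : ℝ) := by
      have := (le_div_iff₀ h2).mp h1
      nlinarith
    exact_mod_cast this
  have habs : ∀ k, |fejerSymbol (n (k + 1)) x - fejerSymbol (n k) x|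
      = fejerSymbol (n (k + 1)) x - fejerSymbol (n k) x := by
    intro k
    rw [abs_of_nonneg]
    linarith [fejerSymbol_mono (hmono k) x]
  have htel : ∀ M : ℕ, ∑ k ∈ Finset.Icc 1 M,
      (fejerSymbol (n (k + 1)) x - fejerSymbol (n k) x)
      = fejerSymbol (n (M + 1)) x - fejerSymbol (n 1) x := by
    intro M
    induction M with
    | zero => simp
    | succ M ih =>
      rw [Finset.sum_Icc_succ_top (by omega), ih]
      ring
  calc ∑ k ∈ Finset.Icc 1 N, |fejerSymbol (n (k + 1)) x - fejerSymbol (n k) x|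
      = fejerSymbol (n (N + 1)) x - fejerSymbol (n 1) x := by
        simp_rw [habs]; exact htel N
    _ ≤ 1 := by linarith [fejerSymbol_le_one (n (N + 1)) x, fejerSymbol_nonneg (n 1) x]
    _ ≤ 2 * α / (α - 1) := by
        rw [le_div_iff₀ (by linarith)]
        nlinarith
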